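/- Let G be a finite connected simple graph, let 𝒫 = (X_1,…,X_d) be a path decomposition of G, and let 𝒢 be the derived graph of G and 𝒫. Let C_1 ⊆ C_2 ⊆ … ⊆ C_m be subsets of V(𝒢) such that C_1 = {v} for some vertex v of 𝒢, C_m = V(𝒢), and C_j \ C_{j−1} ⊆ N_𝒢(C_{j−1}) for every j = 2,…,m. Define B_1 = C_1, B_j = δ(C_j) ∪ (C_j \ C_{j−1}) for j = 2,…,m, and Z_j = ⋃_{v_i(H) ∈ B_j} V(H) for j = 1,…,m. Then (Z_1,…,Z_m) is a connected path decomposition of G. -/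

import Mathlib

open SimpleGraph

/-- A path decomposition of `G` with bags `X 0, …, X (d-1)`. -/
def IsPathDecomp {V : Type*} (G : SimpleGraph V) {d : ℕ} (X : Fin d → Finset V) : Prop :=
  (∀ v : V, ∃ i, v ∈ X i) ∧
  (∀ u v : V, G.Adj u v → ∃ i, u ∈ X i ∧ v ∈ X i) ∧
  (∀ i j k : Fin d, i ≤ j → j ≤ k → ∀ v : V, v ∈ X i → v ∈ X k → v ∈ X j)

/-- Vertices of the derived graph: pairs `(i, H)` where `H` is a connected component of
the subgraph of `G` induced by the bag `X i`. -/
def DVert {V : Type*} (G : SimpleGraph V) {d : ℕ} (X : Fin d → Finset V) : Type _ :=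
  Σ i : Fin d, (G.induce (X i : Set V)).ConnectedComponent

/-- The set `V(H) ⊆ V(G)` of vertices of the component represented by a derived vertex. -/
def dsupp {V : Type*} (G : SimpleGraph V) {d : ℕ} (X : Fin d → Finset V)
    (x : DVert G X) : Set V :=
  {v | ∃ h : v ∈ (X x.1 : Set V),
    (G.induce (X x.1 : Set V)).connectedComponentMk ⟨v, h⟩ = x.2}

/-- The derived graph `𝒢` of `G` and the path decomposition `X`: vertices in consecutive
layers are adjacent exactly when their components share a vertex of `G`.
(Layers are numbered `1, …, d`; a vertex `x` lies in layer `x.1 + 1`.) -/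
def derived {V : Type*} (G : SimpleGraph V) {d : ℕ} (X : Fin d → Finset V) :
    SimpleGraph (DVert G X) where
  Adj a b := ((a.1 : ℕ) + 1 = (b.1 : ℕ) ∨ (b.1 : ℕ) + 1 = (a.1 : ℕ)) ∧
    (dsupp G X a ∩ dsupp G X b).Nonempty
  symm := ⟨by
    rintro a b ⟨h1, h2⟩
    exact ⟨h1.symm, by rwa [Set.inter_comm]⟩⟩
  loopless := ⟨by
    rintro a ⟨h1, -⟩
    rcases h1 with h | h <;> omega⟩

/-- The layer `V_i` of the derived graph (`1`-based: `V_i = {x | x.1 + 1 = i}`). -/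
def layer {V : Type*} (G : SimpleGraph V) {d : ℕ} (X : Fin d → Finset V) (i : ℕ) :
    Set (DVert G X) :=
  {x | (x.1 : ℕ) + 1 = i}

/-- The border `δ(C)`: vertices of `C` with a neighbor outside `C`. -/
def border {V : Type*} (G : SimpleGraph V) {d : ℕ} (X : Fin d → Finset V)
    (C : Set (DVert G X)) : Set (DVert G X) :=
  {x | x ∈ C ∧ ∃ y, (derived G X).Adj x y ∧ y ∉ C}

/-- The neighborhood `N_𝒢(S)`: vertices outside `S` adjacent to some vertex of `S`. -/
def nbhd {V : Type*} (G : SimpleGraph V) {d : ℕ} (X : Fin d → Finset V)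
    (S : Set (DVert G X)) : Set (DVert G X) :=
  {u | u ∉ S ∧ ∃ x ∈ S, (derived G X).Adj u x}

/-- The weight of a set of derived vertices: `ω(S) = Σ_{x∈S} |V(H_x)|`. -/
noncomputable def wsum {V : Type*} (G : SimpleGraph V) {d : ℕ} (X : Fin d → Finset V)
    (S : Set (DVert G X)) : ℕ :=
  ∑ᶠ x ∈ S, (dsupp G X x).ncard

/-- The right extremity `r(S)` (`1`-based); `r(∅) = 0` by convention. -/
noncomputable def rIdx {V : Type*} (G : SimpleGraph V) {d : ℕ} (X : Fin d → Finset V)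
    (S : Set (DVert G X)) : ℕ :=
  sSup {n | ∃ x ∈ S, (x.1 : ℕ) + 1 = n}

/-- The left extremity `l(S)` (`1`-based); `l(∅) = d + 1` by convention. -/
noncomputable def lIdx {V : Type*} (G : SimpleGraph V) {d : ℕ} (X : Fin d → Finset V)
    (S : Set (DVert G X)) : ℕ :=
  sInf ({n | ∃ x ∈ S, (x.1 : ℕ) + 1 = n} ∪ {d + 1})

/-- `(BL, BR)` is a border partition of `C`: disjoint sets whose union is `δ(C)`,
with `BL ⊆ V_1 ∪ … ∪ V_i` and `BR ⊆ V_{i+1} ∪ … ∪ V_d` for some `0 ≤ i ≤ d`. -/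
def IsBorderPartition {V : Type*} (G : SimpleGraph V) {d : ℕ} (X : Fin d → Finset V)
    (C BL BR : Set (DVert G X)) : Prop :=
  Disjoint BL BR ∧ border G X C = BL ∪ BR ∧
    ∃ i : ℕ, i ≤ d ∧ (∀ x ∈ BL, (x.1 : ℕ) + 1 ≤ i) ∧ (∀ x ∈ BR, i + 1 ≤ (x.1 : ℕ) + 1)

/-- `u` and `w` are connected by a progressive path of `𝒢`
(a path meeting each layer at most once). -/
def ProgConn {V : Type*} (G : SimpleGraph V) {d : ℕ} (X : Fin d → Finset V)
    (u w : DVert G X) : Prop :=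
  ∃ p : (derived G X).Walk u w, ∀ a ∈ p.support, ∀ b ∈ p.support, a.1 = b.1 → a = b

/-- The vertex set of the left branch `branch_L(C, i)`: `BL` together with all
`v ∈ V_k \ C`, `i ≤ k < r(BL)`, joined by a progressive path to some `x ∈ V_j ∩ BL`, `k < j`. -/
def branchL {V : Type*} (G : SimpleGraph V) {d : ℕ} (X : Fin d → Finset V)
    (C BL : Set (DVert G X)) (i : ℕ) : Set (DVert G X) :=
  BL ∪ {v | v ∉ C ∧ i ≤ (v.1 : ℕ) + 1 ∧ (v.1 : ℕ) + 1 < rIdx G X BL ∧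
    ∃ x ∈ BL, (v.1 : ℕ) < (x.1 : ℕ) ∧ ProgConn G X v x}

/-- The vertex set of the right branch `branch_R(C, i)`: `BR` together with all
`v ∈ V_k \ C`, `l(BR) < k ≤ i`, joined by a progressive path to some `x ∈ V_j ∩ BR`, `j < k`. -/
def branchR {V : Type*} (G : SimpleGraph V) {d : ℕ} (X : Fin d → Finset V)
    (C BR : Set (DVert G X)) (i : ℕ) : Set (DVert G X) :=
  BR ∪ {v | v ∉ C ∧ lIdx G X BR < (v.1 : ℕ) + 1 ∧ (v.1 : ℕ) + 1 ≤ i ∧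
    ∃ x ∈ BR, (x.1 : ℕ) < (v.1 : ℕ) ∧ ProgConn G X v x}

/-- The external vertices of a branch with vertex set `S` (relative to `C`):
vertices of `S` with a neighbor outside `C ∪ S`. -/
def extSet {V : Type*} (G : SimpleGraph V) {d : ℕ} (X : Fin d → Finset V)
    (C S : Set (DVert G X)) : Set (DVert G X) :=
  {v | v ∈ S ∧ ∃ u, (derived G X).Adj v u ∧ u ∉ C ∪ S}

/-- The left branch `branch_L(C, i)` is proper: no external vertices in layers `> i`. -/
def ProperL {V : Type*} (G : SimpleGraph V) {d : ℕ} (X : Fin d → Finset V)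
    (C BL : Set (DVert G X)) (i : ℕ) : Prop :=
  ∀ v ∈ extSet G X C (branchL G X C BL i), (v.1 : ℕ) + 1 ≤ i

/-- The right branch `branch_R(C, i)` is proper: no external vertices in layers `< i`. -/
def ProperR {V : Type*} (G : SimpleGraph V) {d : ℕ} (X : Fin d → Finset V)
    (C BR : Set (DVert G X)) (i : ℕ) : Prop :=
  ∀ v ∈ extSet G X C (branchR G X C BR i), i ≤ (v.1 : ℕ) + 1

section Aux
variable {V : Type*} {G : SimpleGraph V} {d : ℕ} {X : Fin d → Finset V}

lemma mem_dsupp_self {i : Fin d} {u : V} (h : u ∈ (X i : Set V)) :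
    u ∈ dsupp G X ⟨i, (G.induce (X i : Set V)).connectedComponentMk ⟨u, h⟩⟩ := ⟨h, rfl⟩

lemma reachable_induce_of_walk {A S : Set V} :
    ∀ {a b : ↥A} (p : (G.induce A).Walk a b), (∀ c ∈ p.support, (c : V) ∈ S) →
      ∀ (ha : (a : V) ∈ S) (hb : (b : V) ∈ S),
      (G.induce S).Reachable ⟨a, ha⟩ ⟨b, hb⟩ := by
  intro a b p
  induction p with
  | nil => intro _ ha hb; exact Reachable.refl _
  | @cons a c b h q ih =>
    intro hs ha hb
    have hc : (c : V) ∈ S := hs c (by simp)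
    have hadj : (G.induce S).Adj ⟨a, ha⟩ ⟨c, hc⟩ := by
      simpa using (comap_adj.mp h)
    exact hadj.reachable.trans (ih (fun e he => hs e (by simp [he])) hc hb)

lemma reachable_of_mem_dsupp {S : Set V} {x : DVert G X} (hS : dsupp G X x ⊆ S)
    {u w : V} (hu : u ∈ dsupp G X x) (hw : w ∈ dsupp G X x) :
    (G.induce S).Reachable ⟨u, hS hu⟩ ⟨w, hS hw⟩ := by
  classical
  obtain ⟨hu', heu⟩ := hu
  obtain ⟨hw', hew⟩ := hw
  have hreach : (G.induce (X x.1 : Set V)).Reachable ⟨u, hu'⟩ ⟨w, hw'⟩ :=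
    ConnectedComponent.exact (heu.trans hew.symm)
  obtain ⟨p⟩ := hreach
  have hsup : ∀ c ∈ p.support, (c : V) ∈ S := by
    intro c hc
    have hr : (G.induce (X x.1 : Set V)).Reachable ⟨u, hu'⟩ c := ⟨p.takeUntil c hc⟩
    refine hS ⟨c.2, ?_⟩
    have : (G.induce (X x.1 : Set V)).connectedComponentMk c
        = (G.induce (X x.1 : Set V)).connectedComponentMk ⟨u, hu'⟩ :=
      ConnectedComponent.sound hr.symm
    exact this.trans heu
  exact reachable_induce_of_walk p hsup (hS ⟨hu', heu⟩) (hS ⟨hw', hew⟩)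

lemma cross_lemma (hX3 : ∀ i j k : Fin d, i ≤ j → j ≤ k → ∀ v : V, v ∈ X i → v ∈ X k → v ∈ X j)
    (C : Set (DVert G X)) {u : V} :
    ∀ n : ℕ, ∀ a b : Fin d, ((a : ℕ) - (b : ℕ)) + ((b : ℕ) - (a : ℕ)) ≤ n →
    ∀ (ha : u ∈ (X a : Set V)) (hb : u ∈ (X b : Set V)),
    (⟨a, (G.induce (X a : Set V)).connectedComponentMk ⟨u, ha⟩⟩ : DVert G X) ∈ C →
    (⟨b, (G.induce (X b : Set V)).connectedComponentMk ⟨u, hb⟩⟩ : DVert G X) ∉ C →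
    ∃ w ∈ border G X C, u ∈ dsupp G X w := by
  intro n
  induction n with
  | zero =>
    intro a b hd ha hb hin hout
    have : a = b := Fin.ext (by omega)
    subst this
    exact absurd hin hout
  | succ n ih =>
    intro a b hd ha hb hin hout
    rcases lt_trichotomy (a : ℕ) (b : ℕ) with hab | hab | hab
    · have hlt : (a : ℕ) + 1 < d := by have := b.isLt; omega
      set a' : Fin d := ⟨(a : ℕ) + 1, hlt⟩ with ha'def
      have ha' : u ∈ (X a' : Set V) := by
        have := hX3 a a' b (by simp [Fin.le_def, ha'def]) (by simp only [Fin.le_def, ha'def]; omega) u ha hb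
        exact this
      have hadj : (derived G X).Adj
          ⟨a, (G.induce (X a : Set V)).connectedComponentMk ⟨u, ha⟩⟩
          ⟨a', (G.induce (X a' : Set V)).connectedComponentMk ⟨u, ha'⟩⟩ :=
        ⟨Or.inl rfl, ⟨u, mem_dsupp_self ha, mem_dsupp_self ha'⟩⟩
      by_cases hC' : (⟨a', (G.induce (X a' : Set V)).connectedComponentMk ⟨u, ha'⟩⟩ : DVert G X) ∈ C
      · exact ih a' b (by simp only [ha'def]; omega) ha' hb hC' hout
      · exact ⟨_, ⟨hin, _, hadj, hC'⟩, mem_dsupp_self ha⟩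
    · have : a = b := Fin.ext hab
      subst this
      exact absurd hin hout
    · have hlt : (a : ℕ) - 1 < d := by have := a.isLt; omega
      set a' : Fin d := ⟨(a : ℕ) - 1, hlt⟩ with ha'def
      have ha' : u ∈ (X a' : Set V) := by
        have := hX3 b a' a (by simp only [Fin.le_def, ha'def]; omega) (by simp only [Fin.le_def, ha'def]; omega) u hb ha
        exact this
      have hadj : (derived G X).Adj
          ⟨a, (G.induce (X a : Set V)).connectedComponentMk ⟨u, ha⟩⟩
          ⟨a', (G.induce (X a' : Set V)).connectedComponentMk ⟨u, ha'⟩⟩ :=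
        ⟨Or.inr (by simp only [ha'def]; omega), ⟨u, mem_dsupp_self ha, mem_dsupp_self ha'⟩⟩
      by_cases hC' : (⟨a', (G.induce (X a' : Set V)).connectedComponentMk ⟨u, ha'⟩⟩ : DVert G X) ∈ C
      · exact ih a' b (by simp only [ha'def]; omega) ha' hb hC' hout
      · exact ⟨_, ⟨hin, _, hadj, hC'⟩, mem_dsupp_self ha⟩

end Aux

/-- Correctness of the `SCP` construction: given a chain of expansions
`C 0 = {v} ⊆ C 1 ⊆ … ⊆ C (m-1) = V(𝒢)` in the derived graph, each step adding only
neighbors of the current expansion, the bags `Z j = ⋃_{x ∈ B j} V(H_x)` with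
`B 0 = C 0` and `B j = δ(C j) ∪ (C j \ C (j-1))` form a connected path decomposition
of `G`. -/
theorem scp_correctness {V : Type*} [Fintype V] (G : SimpleGraph V) (hG : G.Connected)
    {d : ℕ} (X : Fin d → Finset V) (hX : IsPathDecomp G X)
    (m : ℕ) (hm : 1 ≤ m) (C B : ℕ → Set (DVert G X)) (Z : ℕ → Set V)
    (v : DVert G X) (hC0 : C 0 = {v}) (hCm : C (m - 1) = Set.univ)
    (hmono : ∀ j : ℕ, j + 1 < m → C j ⊆ C (j + 1))
    (hnbr : ∀ j : ℕ, j + 1 < m → C (j + 1) \ C j ⊆ nbhd G X (C j))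
    (hB0 : B 0 = C 0)
    (hB : ∀ j : ℕ, 1 ≤ j → j < m → B j = border G X (C j) ∪ (C j \ C (j - 1)))
    (hZ : ∀ j : ℕ, j < m → Z j = ⋃ x ∈ B j, dsupp G X x) :
    (∀ u : V, ∃ j < m, u ∈ Z j) ∧
    (∀ u w : V, G.Adj u w → ∃ j < m, u ∈ Z j ∧ w ∈ Z j) ∧
    (∀ i j k : ℕ, i ≤ j → j ≤ k → k < m → Z i ∩ Z k ⊆ Z j) ∧
    (∀ j < m, (G.induce (⋃ p ∈ {p : ℕ | p ≤ j}, Z p)).Connected) := by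
  classical
  obtain ⟨hX1, hX2, hX3⟩ := hX
  -- monotone chain
  have hCmono : ∀ q, q < m → ∀ p, p ≤ q → C p ⊆ C q := by
    intro q
    induction q with
    | zero =>
      intro _ p hp
      have : p = 0 := by omega
      subst this; exact subset_rfl
    | succ q ih =>
      intro hq p hp
      rcases Nat.lt_or_ge p (q + 1) with h | h
      · exact (ih (by omega) p (by omega)).trans (hmono q hq)
      · have : p = q + 1 := by omega
        subst this; exact subset_rfl
  set t : DVert G X → ℕ := fun x => sInf {j | x ∈ C j} with htdef
  have hne : ∀ x : DVert G X, x ∈ C (m - 1) := fun x => by rw [hCm]; trivial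
  have htmem : ∀ x : DVert G X, x ∈ C (t x) := fun x =>
    (Nat.sInf_mem (⟨m - 1, hne x⟩ : {j | x ∈ C j}.Nonempty) : t x ∈ {j | x ∈ C j})
  have htle : ∀ x, t x ≤ m - 1 := fun x => Nat.sInf_le (show m - 1 ∈ {j | x ∈ C j} from hne x)
  have htle' : ∀ x j, x ∈ C j → t x ≤ j := fun x j h => Nat.sInf_le (show j ∈ {j | x ∈ C j} from h)
  have hBC : ∀ j, j < m → B j ⊆ C j := by
    intro j hj
    rcases Nat.eq_zero_or_pos j with rfl | hj1
    · rw [hB0]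
    · rw [hB j hj1 hj]
      rintro x (hx | hx) <;> exact hx.1
  have hmemB : ∀ (x : DVert G X) (j : ℕ), j < m → x ∈ C j → ∃ p ≤ j, x ∈ B p := by
    intro x j hj hx
    refine ⟨t x, htle' x j hx, ?_⟩
    rcases Nat.eq_zero_or_pos (t x) with h0 | h1
    · rw [h0, hB0, ← h0]; exact htmem x
    · rw [hB (t x) h1 (by have := htle' x j hx; omega)]
      exact Or.inr ⟨htmem x, fun hc => absurd (htle' x _ hc) (by omega)⟩
  -- Part 1
  have hpart1 : ∀ u : V, ∃ j < m, u ∈ Z j := by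
    intro u
    obtain ⟨i, hi⟩ := hX1 u
    have hi' : u ∈ (X i : Set V) := Finset.mem_coe.mpr hi
    obtain ⟨p, hp, hpB⟩ := hmemB ⟨i, (G.induce (X i : Set V)).connectedComponentMk ⟨u, hi'⟩⟩
      (m - 1) (by omega) (hne _)
    refine ⟨p, by omega, ?_⟩
    rw [hZ p (by omega)]
    exact Set.mem_biUnion hpB (mem_dsupp_self hi')
  refine ⟨hpart1, ?_, ?_, ?_⟩
  -- Part 2
  · intro u w hadj
    obtain ⟨i, hui, hwi⟩ := hX2 u w hadj
    have hui' : u ∈ (X i : Set V) := Finset.mem_coe.mpr hui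
    have hwi' : w ∈ (X i : Set V) := Finset.mem_coe.mpr hwi
    have hadj' : (G.induce (X i : Set V)).Adj ⟨u, hui'⟩ ⟨w, hwi'⟩ := comap_adj.mpr hadj
    obtain ⟨p, hp, hpB⟩ := hmemB ⟨i, (G.induce (X i : Set V)).connectedComponentMk ⟨u, hui'⟩⟩
      (m - 1) (by omega) (hne _)
    refine ⟨p, by omega, ?_, ?_⟩
    · rw [hZ p (by omega)]
      exact Set.mem_biUnion hpB (mem_dsupp_self hui')
    · rw [hZ p (by omega)]
      refine Set.mem_biUnion hpB ⟨hwi', ?_⟩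
      exact ConnectedComponent.connectedComponentMk_eq_of_adj hadj'.symm
  -- Part 3
  · intro i j k hij hjk hk u hu
    obtain ⟨hui, huk⟩ := hu
    rcases eq_or_lt_of_le hij with rfl | hij'
    · exact hui
    rcases eq_or_lt_of_le hjk with rfl | hjk'
    · exact huk
    rw [hZ i (by omega)] at hui
    rw [hZ k hk] at huk
    obtain ⟨x1, hx1B, hx1s⟩ : ∃ x ∈ B i, u ∈ dsupp G X x := by simpa using hui
    obtain ⟨x3, hx3B, hx3s⟩ : ∃ x ∈ B k, u ∈ dsupp G X x := by simpa using huk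
    have hx1C : x1 ∈ C j := hCmono j (by omega) i (by omega) (hBC i (by omega) hx1B)
    rw [hZ j (by omega)]
    by_cases hx3C : x3 ∈ C j
    · rw [hB k (by omega) hk] at hx3B
      rcases hx3B with hb | hnew
      · obtain ⟨-, y, hadj, hyn⟩ := hb
        have hbj : x3 ∈ border G X (C j) :=
          ⟨hx3C, y, hadj, fun hc => hyn (hCmono k hk j (by omega) hc)⟩
        have : x3 ∈ B j := by
          rw [hB j (by omega) (by omega)]; exact Or.inl hbj
        exact Set.mem_biUnion this hx3s
      · exact absurd (hCmono (k - 1) (by omega) j (by omega) hx3C) hnew.2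
    · obtain ⟨h1, he1⟩ := hx1s
      obtain ⟨h3, he3⟩ := hx3s
      have hx1' : (⟨x1.1, (G.induce (X x1.1 : Set V)).connectedComponentMk ⟨u, h1⟩⟩ : DVert G X) ∈ C j := by
        rw [he1]; exact hx1C
      have hx3' : (⟨x3.1, (G.induce (X x3.1 : Set V)).connectedComponentMk ⟨u, h3⟩⟩ : DVert G X) ∉ C j := by
        rw [he3]; exact hx3C
      obtain ⟨w, hwb, hws⟩ := cross_lemma hX3 (C j) (d + d) x1.1 x3.1
        (by have := x1.1.isLt; have := x3.1.isLt; omega) h1 h3 hx1' hx3'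
      have : w ∈ B j := by
        rw [hB j (by omega) (by omega)]; exact Or.inl hwb
      exact Set.mem_biUnion this hws
  -- Part 4
  · intro j hj
    have hkey : (⋃ p ∈ {p : ℕ | p ≤ j}, Z p) = ⋃ x ∈ C j, dsupp G X x := by
      ext u
      simp only [Set.mem_iUnion, Set.mem_setOf_eq, exists_prop]
      constructor
      · rintro ⟨p, hp, hup⟩
        rw [hZ p (by omega)] at hup
        obtain ⟨x, hxB, hxs⟩ : ∃ x ∈ B p, u ∈ dsupp G X x := by simpa using hup
        exact ⟨x, hCmono j hj p hp (hBC p (by omega) hxB), hxs⟩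
      · rintro ⟨x, hxC, hxs⟩
        obtain ⟨p, hp, hpB⟩ := hmemB x j hj hxC
        refine ⟨p, hp, ?_⟩
        rw [hZ p (by omega)]
        exact Set.mem_biUnion hpB hxs
    rw [hkey]
    set U : Set V := ⋃ x ∈ C j, dsupp G X x with hUdef
    have hsub : ∀ x ∈ C j, dsupp G X x ⊆ U := fun x hx => Set.subset_biUnion_of_mem hx
    obtain ⟨a, hrep⟩ := Quot.exists_rep v.2
    have hu0 : (a : V) ∈ dsupp G X v := ⟨a.2, hrep⟩
    have hvC : v ∈ C j := hCmono j hj 0 (Nat.zero_le _) (by rw [hC0]; rfl)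
    have hu0U : (a : V) ∈ U := hsub v hvC hu0
    have R : ∀ n : ℕ, ∀ x : DVert G X, ∀ hx : x ∈ C j, t x ≤ n → ∀ u, ∀ hu : u ∈ dsupp G X x,
        (G.induce U).Reachable ⟨u, hsub x hx hu⟩ ⟨a, hu0U⟩ := by
      intro n
      induction n with
      | zero =>
        intro x hx h0 u hu
        have hx0 : x ∈ C 0 := by
          have := htmem x
          rwa [Nat.le_zero.mp h0] at this
        rw [hC0] at hx0
        subst hx0
        exact reachable_of_mem_dsupp (hsub x hx) hu hu0
      | succ n ih =>
        intro x hx hle u hu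
        rcases Nat.lt_or_ge (t x) (n + 1) with h | h
        · exact ih x hx (by omega) u hu
        · have htx : t x = n + 1 := by omega
          have htxj : t x ≤ j := htle' x j hx
          have hm' : n + 1 < m := by have := htle x; omega
          have hxn : x ∉ C n := fun hc => by have := htle' x n hc; omega
          have hxn1 : x ∈ C (n + 1) := by rw [← htx]; exact htmem x
          obtain ⟨-, y, hyC, hadjxy⟩ := hnbr n hm' ⟨hxn1, hxn⟩
          obtain ⟨w, hwx, hwy⟩ := hadjxy.2
          have hyCj : y ∈ C j := hCmono j hj n (by omega) hyC
          exact (reachable_of_mem_dsupp (hsub x hx) hu hwx).trans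
            (ih y hyCj (htle' y n hyC) w hwy)
    refine (connected_iff_exists_forall_reachable _).mpr ⟨⟨a, hu0U⟩, ?_⟩
    rintro ⟨q, hq⟩
    obtain ⟨y, hy, huy⟩ : ∃ y ∈ C j, q ∈ dsupp G X y := by
      simpa [hUdef] using hq
    exact (R (t y) y hy le_rfl q huy).symm
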